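/- Fix n ≥ 3 and parameters β₄,…,β_n, δ, γ in ℂ. Every even derivation d of the Leibniz superalgebra H(β₄,…,β_n,δ,γ) has the form: d(e₁) = 2a₁e₁ + a₂e₃ + ⋯ + a_{n-1}e_n, d(e₂) = b₂e₂, d(e_i) = 2(i-1)a₁e_i + a₂e_{i+1} + ⋯ + a_{n-i+1}e_n (3 ≤ i ≤ n), d(y_i) = (2i-1)a₁y_i + a₂y_{i+1} + ⋯ + a_{n-i+1}y_n (1 ≤ i ≤ n), for some scalars a₁,…,a_{n-1}, b₂ satisfying β_i(2(i-2)a₁ - b₂) = 0 for 4 ≤ i ≤ n, δ(2(n-1)a₁ - b₂) = 0, and γ((n-1)a₁ - b₂) = 0. -/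

import Mathlib

/-- Description of the even derivations of the Leibniz superalgebra
H(β₄,…,β_n,δ,γ) with multiplication table (4) of the paper. -/
theorem statement9 {V : Type*} [AddCommGroup V] [Module ℂ V]
    (n : ℕ) (hn : 3 ≤ n) (β : ℕ → ℂ) (δ γ : ℂ)
    (bas : Module.Basis (Fin n ⊕ Fin n) ℂ V)
    (eN yN : ℕ → V)
    (heN : ∀ k (h : 1 ≤ k ∧ k ≤ n), eN k = bas (Sum.inl ⟨k - 1, by omega⟩))
    (heN0 : ∀ k, ¬(1 ≤ k ∧ k ≤ n) → eN k = 0)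
    (hyN : ∀ k (h : 1 ≤ k ∧ k ≤ n), yN k = bas (Sum.inr ⟨k - 1, by omega⟩))
    (hyN0 : ∀ k, ¬(1 ≤ k ∧ k ≤ n) → yN k = 0)
    (br : V →ₗ[ℂ] V →ₗ[ℂ] V)
    -- multiplication table (4):
    (hee1 : ∀ i, 1 ≤ i → i ≤ n →
      br (eN i) (eN 1) = if i = 1 then eN 3 else if i = 2 then 0 else eN (i + 1))
    (hee2a : br (eN 1) (eN 2) = ∑ k ∈ Finset.Icc 4 n, β k • eN k)
    (hee2b : br (eN 2) (eN 2) = γ • eN n)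
    (hee2c : ∀ i, 3 ≤ i → i ≤ n →
      br (eN i) (eN 2) = ∑ k ∈ Finset.Icc 4 n, β k • eN (i + k - 2))
    (hee0 : ∀ i j, 1 ≤ i → i ≤ n → 3 ≤ j → j ≤ n → br (eN i) (eN j) = 0)
    (hye1 : ∀ j, 1 ≤ j → j ≤ n → br (yN j) (eN 1) = yN (j + 1))
    (hye2a : br (yN 1) (eN 2) = (∑ k ∈ Finset.Icc 4 n, β k • yN (k - 1)) + δ • yN n)
    (hye2b : ∀ j, 2 ≤ j → j ≤ n →
      br (yN j) (eN 2) = ∑ k ∈ Finset.Icc 4 n, β k • yN (j + k - 2))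
    (hye0 : ∀ j i, 1 ≤ j → j ≤ n → 3 ≤ i → i ≤ n → br (yN j) (eN i) = 0)
    (hey1 : ∀ i, 1 ≤ i → i ≤ n → br (eN i) (yN 1) =
      if i = 1 then (1 / 2 : ℂ) • yN 2 else if i = 2 then 0 else (1 / 2 : ℂ) • yN i)
    (hey0 : ∀ i j, 1 ≤ i → i ≤ n → 2 ≤ j → j ≤ n → br (eN i) (yN j) = 0)
    (hyy1 : ∀ j, 1 ≤ j → j ≤ n →
      br (yN j) (yN 1) = if j = 1 then eN 1 else eN (j + 1))
    (hyy0 : ∀ j k, 1 ≤ j → j ≤ n → 2 ≤ k → k ≤ n → br (yN j) (yN k) = 0)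
    -- d is an even derivation:
    (d : Module.End ℂ V)
    (hdE : ∀ x ∈ Submodule.span ℂ (Set.range fun i : Fin n => bas (Sum.inl i)),
      d x ∈ Submodule.span ℂ (Set.range fun i : Fin n => bas (Sum.inl i)))
    (hdY : ∀ x ∈ Submodule.span ℂ (Set.range fun j : Fin n => bas (Sum.inr j)),
      d x ∈ Submodule.span ℂ (Set.range fun j : Fin n => bas (Sum.inr j)))
    (hder : ∀ u v : V, d (br u v) = br (d u) v + br u (d v)) :
    ∃ (a : ℕ → ℂ) (b2 : ℂ),
      d (eN 1) = (2 * a 1) • eN 1 + ∑ k ∈ Finset.Icc 2 (n - 1), a k • eN (k + 1) ∧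
      d (eN 2) = b2 • eN 2 ∧
      (∀ i, 3 ≤ i → i ≤ n → d (eN i) =
        (2 * ((i : ℂ) - 1) * a 1) • eN i +
          ∑ k ∈ Finset.Icc 2 (n - i + 1), a k • eN (i + k - 1)) ∧
      (∀ i, 1 ≤ i → i ≤ n → d (yN i) =
        ((2 * (i : ℂ) - 1) * a 1) • yN i +
          ∑ k ∈ Finset.Icc 2 (n - i + 1), a k • yN (i + k - 1)) ∧
      (∀ i, 4 ≤ i → i ≤ n → β i * (2 * ((i : ℂ) - 2) * a 1 - b2) = 0) ∧
      δ * (2 * ((n : ℂ) - 1) * a 1 - b2) = 0 ∧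
      γ * (((n : ℂ) - 1) * a 1 - b2) = 0 := by
  classical
  have hn1 : 1 ≤ n := by omega
  have cEl : ∀ (m : ℕ) (j : Fin n), bas.coord (Sum.inl j) (eN m)
      = if m = (j : ℕ) + 1 then 1 else 0 := by
    intro m j
    by_cases h : 1 ≤ m ∧ m ≤ n
    · rw [heN m h, Module.Basis.coord_apply, bas.repr_self, Finsupp.single_apply]
      by_cases hmj : m = (j : ℕ) + 1
      · rw [if_pos, if_pos hmj]
        congr 1
        exact Fin.ext (by simp; omega)
      · rw [if_neg, if_neg hmj]
        intro hc
        injection hc with hc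
        apply hmj
        have := Fin.mk.inj_iff.mp hc
        omega
    · rw [heN0 m h, map_zero, if_neg (by have := j.isLt; omega)]
  have cEr : ∀ (m : ℕ) (j : Fin n), bas.coord (Sum.inr j) (eN m) = 0 := by
    intro m j
    by_cases h : 1 ≤ m ∧ m ≤ n
    · rw [heN m h, Module.Basis.coord_apply, bas.repr_self, Finsupp.single_apply, if_neg (by simp)]
    · rw [heN0 m h, map_zero]
  have cYr : ∀ (m : ℕ) (j : Fin n), bas.coord (Sum.inr j) (yN m)
      = if m = (j : ℕ) + 1 then 1 else 0 := by
    intro m j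
    by_cases h : 1 ≤ m ∧ m ≤ n
    · rw [hyN m h, Module.Basis.coord_apply, bas.repr_self, Finsupp.single_apply]
      by_cases hmj : m = (j : ℕ) + 1
      · rw [if_pos, if_pos hmj]
        congr 1
        exact Fin.ext (by simp; omega)
      · rw [if_neg, if_neg hmj]
        intro hc
        injection hc with hc
        apply hmj
        have := Fin.mk.inj_iff.mp hc
        omega
    · rw [hyN0 m h, map_zero, if_neg (by have := j.isLt; omega)]
  have cYl : ∀ (m : ℕ) (j : Fin n), bas.coord (Sum.inl j) (yN m) = 0 := by
    intro m j
    by_cases h : 1 ≤ m ∧ m ≤ n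
    · rw [hyN m h, Module.Basis.coord_apply, bas.repr_self, Finsupp.single_apply, if_neg (by simp)]
    · rw [hyN0 m h, map_zero]
  have extV : ∀ x y : V, (∀ idx : Fin n ⊕ Fin n, bas.coord idx x = bas.coord idx y) → x = y := by
    intro x y h
    refine bas.ext_elem fun idx => ?_
    simpa [Module.Basis.coord_apply] using h idx
  have spanE0 : ∀ x ∈ Submodule.span ℂ (Set.range fun i : Fin n => bas (Sum.inl i)),
      ∀ j : Fin n, bas.coord (Sum.inr j) x = 0 := by
    intro x hx j
    induction hx using Submodule.span_induction with
    | mem x hx =>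
        obtain ⟨i, rfl⟩ := hx
        rw [Module.Basis.coord_apply, bas.repr_self, Finsupp.single_apply, if_neg (by simp)]
    | zero => simp
    | add x y _ _ hx hy =>
        simp only [Module.Basis.coord_apply] at hx hy
        simp [hx, hy]
    | smul a x _ hx =>
        simp only [Module.Basis.coord_apply] at hx
        simp [hx]
  have spanY0 : ∀ x ∈ Submodule.span ℂ (Set.range fun j : Fin n => bas (Sum.inr j)),
      ∀ j : Fin n, bas.coord (Sum.inl j) x = 0 := by
    intro x hx j
    induction hx using Submodule.span_induction with
    | mem x hx =>
        obtain ⟨i, rfl⟩ := hx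
        rw [Module.Basis.coord_apply, bas.repr_self, Finsupp.single_apply, if_neg (by simp)]
    | zero => simp
    | add x y _ _ hx hy =>
        simp only [Module.Basis.coord_apply] at hx hy
        simp [hx, hy]
    | smul a x _ hx =>
        simp only [Module.Basis.coord_apply] at hx
        simp [hx]
  have brL : ∀ (s : Finset ℕ) (f : ℕ → ℂ) (x : ℕ → V) (v : V),
      br (∑ k ∈ s, f k • x k) v = ∑ k ∈ s, f k • br (x k) v := by
    intro s f x v
    rw [map_sum, LinearMap.sum_apply]
    exact Finset.sum_congr rfl fun k _ => by rw [map_smul, LinearMap.smul_apply]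
  have brR : ∀ (v : V) (s : Finset ℕ) (f : ℕ → ℂ) (x : ℕ → V),
      br v (∑ k ∈ s, f k • x k) = ∑ k ∈ s, f k • br v (x k) := by
    intro v s f x
    rw [map_sum]
    exact Finset.sum_congr rfl fun k _ => by rw [map_smul]
  have extE : ∀ (m : ℕ) (f g : ℕ → ℂ), 1 ≤ m →
      (∑ k ∈ Finset.Icc m n, f k • eN k) = (∑ k ∈ Finset.Icc m n, g k • eN k) →
      ∀ j, m ≤ j → j ≤ n → f j = g j := by
    intro m f g hm hsum j hj1 hj2
    have h2 := congrArg (bas.coord (Sum.inl ⟨j - 1, by omega⟩)) hsum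
    simp only [map_sum, map_smul, cEl, Fin.val_mk] at h2
    have hj : j - 1 + 1 = j := by omega
    rw [hj] at h2
    simp only [smul_eq_mul, mul_ite, mul_one, mul_zero, Finset.sum_ite_eq'] at h2
    simpa [Finset.mem_Icc, hj1, hj2] using h2
  have extY : ∀ (m : ℕ) (f g : ℕ → ℂ), 1 ≤ m →
      (∑ k ∈ Finset.Icc m n, f k • yN k) = (∑ k ∈ Finset.Icc m n, g k • yN k) →
      ∀ j, m ≤ j → j ≤ n → f j = g j := by
    intro m f g hm hsum j hj1 hj2
    have h2 := congrArg (bas.coord (Sum.inr ⟨j - 1, by omega⟩)) hsum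
    simp only [map_sum, map_smul, cYr, Fin.val_mk] at h2
    have hj : j - 1 + 1 = j := by omega
    rw [hj] at h2
    simp only [smul_eq_mul, mul_ite, mul_one, mul_zero, Finset.sum_ite_eq'] at h2
    simpa [Finset.mem_Icc, hj1, hj2] using h2
  obtain ⟨c, hcval⟩ : ∃ c : ℕ → ℂ, ∀ j : Fin n,
      c ((j : ℕ) + 1) = bas.coord (Sum.inr j) (d (yN 1)) := by
    refine ⟨fun k => if h : 1 ≤ k ∧ k ≤ n then
      bas.coord (Sum.inr ⟨k - 1, by omega⟩) (d (yN 1)) else 0, fun j => ?_⟩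
    dsimp only
    rw [dif_pos ⟨by omega, by have := j.isLt; omega⟩]
    congr 2
  obtain ⟨b, hbval⟩ : ∃ b : ℕ → ℂ, ∀ j : Fin n,
      b ((j : ℕ) + 1) = bas.coord (Sum.inl j) (d (eN 2)) := by
    refine ⟨fun k => if h : 1 ≤ k ∧ k ≤ n then
      bas.coord (Sum.inl ⟨k - 1, by omega⟩) (d (eN 2)) else 0, fun j => ?_⟩
    dsimp only
    rw [dif_pos ⟨by omega, by have := j.isLt; omega⟩]
    congr 2
  have hy1mem : yN 1 ∈ Submodule.span ℂ (Set.range fun j : Fin n => bas (Sum.inr j)) := by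
    rw [hyN 1 ⟨le_rfl, hn1⟩]
    exact Submodule.subset_span ⟨⟨0, by omega⟩, rfl⟩
  have he2mem : eN 2 ∈ Submodule.span ℂ (Set.range fun i : Fin n => bas (Sum.inl i)) := by
    rw [heN 2 ⟨by omega, by omega⟩]
    exact Submodule.subset_span ⟨⟨1, by omega⟩, rfl⟩
  have hdy1 : d (yN 1) = ∑ k ∈ Finset.Icc 1 n, c k • yN k := by
    have hmem := hdY _ hy1mem
    refine extV _ _ fun idx => ?_
    rcases idx with j | j
    · rw [spanY0 _ hmem j, map_sum]
      symm
      refine Finset.sum_eq_zero fun k _ => ?_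
      rw [map_smul, cYl, smul_zero]
    · have hrw : ∀ k ∈ Finset.Icc 1 n,
          bas.coord (Sum.inr j) (c k • yN k) = if k = (j : ℕ) + 1 then c k else 0 := by
        intro k _
        rw [map_smul, cYr, smul_eq_mul, mul_ite, mul_one, mul_zero]
      rw [map_sum, Finset.sum_congr rfl hrw, Finset.sum_ite_eq',
        if_pos (by simp only [Finset.mem_Icc]; have := j.isLt; omega), hcval j]
  have hde2' : d (eN 2) = ∑ k ∈ Finset.Icc 1 n, b k • eN k := by
    have hmem := hdE _ he2mem
    refine extV _ _ fun idx => ?_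
    rcases idx with j | j
    · have hrw : ∀ k ∈ Finset.Icc 1 n,
          bas.coord (Sum.inl j) (b k • eN k) = if k = (j : ℕ) + 1 then b k else 0 := by
        intro k _
        rw [map_smul, cEl, smul_eq_mul, mul_ite, mul_one, mul_zero]
      rw [map_sum, Finset.sum_congr rfl hrw, Finset.sum_ite_eq',
        if_pos (by simp only [Finset.mem_Icc]; have := j.isLt; omega), hbval j]
    · rw [spanE0 _ hmem j, map_sum]
      symm
      refine Finset.sum_eq_zero fun k _ => ?_
      rw [map_smul, cEr, smul_zero]
  have key1 : d (eN 1) = br (d (yN 1)) (yN 1) + br (yN 1) (d (yN 1)) := by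
    have h := hder (yN 1) (yN 1)
    rw [hyy1 1 le_rfl hn1, if_pos rfl] at h
    exact h
  have hsplit1 : Finset.Icc 1 n = insert 1 (Finset.Icc 2 n) := by
    ext k
    simp only [Finset.mem_Icc, Finset.mem_insert]
    omega
  have hde1 : d (eN 1) = (2 * c 1) • eN 1 + ∑ k ∈ Finset.Icc 2 (n - 1), c k • eN (k + 1) := by
    rw [key1, hdy1, brL (Finset.Icc 1 n) c yN (yN 1), brR (yN 1) (Finset.Icc 1 n) c yN]
    have e1 : ∀ k ∈ Finset.Icc 1 n, c k • br (yN k) (yN 1)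
        = c k • (if k = 1 then eN 1 else eN (k + 1)) := by
      intro k hk
      rw [Finset.mem_Icc] at hk
      rw [hyy1 k hk.1 hk.2]
    have e2 : ∀ k ∈ Finset.Icc 1 n, c k • br (yN 1) (yN k)
        = c k • (if k = 1 then eN 1 else 0) := by
      intro k hk
      rw [Finset.mem_Icc] at hk
      by_cases h1 : k = 1
      · subst h1
        rw [hyy1 1 le_rfl hn1, if_pos rfl, if_pos rfl]
      · rw [hyy0 1 k le_rfl hn1 (by omega) hk.2, if_neg h1]
    rw [Finset.sum_congr rfl e1, Finset.sum_congr rfl e2, hsplit1,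
      Finset.sum_insert (by simp), Finset.sum_insert (by simp), if_pos rfl, if_pos rfl]
    have e3 : ∀ k ∈ Finset.Icc 2 n, c k • (if k = 1 then eN 1 else eN (k + 1))
        = c k • eN (k + 1) := by
      intro k hk
      rw [Finset.mem_Icc] at hk
      rw [if_neg (by omega)]
    have e4 : ∀ k ∈ Finset.Icc 2 n, c k • (if k = 1 then eN 1 else (0 : V)) = 0 := by
      intro k hk
      rw [Finset.mem_Icc] at hk
      rw [if_neg (by omega), smul_zero]
    rw [Finset.sum_congr rfl e3, Finset.sum_congr rfl e4, Finset.sum_const_zero, add_zero]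
    have e5 : ∑ k ∈ Finset.Icc 2 (n - 1), c k • eN (k + 1)
        = ∑ k ∈ Finset.Icc 2 n, c k • eN (k + 1) := by
      refine Finset.sum_subset (fun k hk => ?_) (fun k hk hk2 => ?_)
      · simp only [Finset.mem_Icc] at hk ⊢
        omega
      · simp only [Finset.mem_Icc] at hk hk2
        rw [heN0 (k + 1) (by omega), smul_zero]
    rw [e5, two_mul, add_smul]
    abel
  have hdy : ∀ i, 1 ≤ i → i ≤ n → d (yN i) =
      ((2 * (i : ℂ) - 1) * c 1) • yN i
        + ∑ k ∈ Finset.Icc 2 (n - i + 1), c k • yN (i + k - 1) := by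
    intro i hi1
    induction i, hi1 using Nat.le_induction with
    | base =>
      intro _
      rw [hdy1, hsplit1, Finset.sum_insert (by simp)]
      have h1 : n - 1 + 1 = n := by omega
      rw [h1]
      congr 1
      · norm_num
      · refine Finset.sum_congr rfl fun k hk => ?_
        congr 2
        omega
    | succ m hm ih =>
      intro hmn
      have hmn' : m ≤ n := by omega
      have h := hder (yN m) (eN 1)
      rw [hye1 m hm hmn'] at h
      rw [h]
      have hA : br (d (yN m)) (eN 1)
          = ((2 * (m : ℂ) - 1) * c 1) • yN (m + 1)
            + ∑ k ∈ Finset.Icc 2 (n - m + 1), c k • yN (m + k) := by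
        rw [ih hmn', map_add, LinearMap.add_apply, map_smul, LinearMap.smul_apply,
          hye1 m hm hmn',
          brL (Finset.Icc 2 (n - m + 1)) c (fun k => yN (m + k - 1)) (eN 1)]
        congr 1
        refine Finset.sum_congr rfl fun k hk => ?_
        simp only [Finset.mem_Icc] at hk
        rw [hye1 (m + k - 1) (by omega) (by omega)]
        congr 2
        omega
      have hB : br (yN m) (d (eN 1)) = (2 * c 1) • yN (m + 1) := by
        rw [hde1, map_add, map_smul, hye1 m hm hmn',
          brR (yN m) (Finset.Icc 2 (n - 1)) c (fun k => eN (k + 1))]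
        have e0 : ∀ k ∈ Finset.Icc 2 (n - 1), c k • br (yN m) (eN (k + 1)) = 0 := by
          intro k hk
          simp only [Finset.mem_Icc] at hk
          rw [hye0 m (k + 1) hm hmn' (by omega) (by omega), smul_zero]
        rw [Finset.sum_congr rfl e0, Finset.sum_const_zero, add_zero]
      rw [hA, hB]
      have hsum : ∑ k ∈ Finset.Icc 2 (n - (m + 1) + 1), c k • yN (m + 1 + k - 1)
          = ∑ k ∈ Finset.Icc 2 (n - m + 1), c k • yN (m + k) := by
        have e1 : ∀ k ∈ Finset.Icc 2 (n - (m + 1) + 1), c k • yN (m + 1 + k - 1)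
            = c k • yN (m + k) := by
          intro k hk
          congr 2
          omega
        rw [Finset.sum_congr rfl e1]
        refine Finset.sum_subset (fun k hk => ?_) (fun k hk hk2 => ?_)
        · simp only [Finset.mem_Icc] at hk ⊢
          omega
        · simp only [Finset.mem_Icc] at hk hk2
          rw [hyN0 (m + k) (by omega), smul_zero]
      rw [hsum]
      push_cast
      rw [show (2 * ((m : ℂ) + 1) - 1) * c 1 = (2 * (m : ℂ) - 1) * c 1 + 2 * c 1 by ring,
        add_smul]
      abel
  have hde : ∀ i, 3 ≤ i → i ≤ n → d (eN i) =
      (2 * ((i : ℂ) - 1) * c 1) • eN i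
        + ∑ k ∈ Finset.Icc 2 (n - i + 1), c k • eN (i + k - 1) := by
    intro i hi3
    induction i, hi3 using Nat.le_induction with
    | base =>
      intro _
      have h := hder (eN 1) (eN 1)
      rw [hee1 1 le_rfl hn1, if_pos rfl] at h
      rw [h]
      have hA : br (d (eN 1)) (eN 1)
          = (2 * c 1) • eN 3 + ∑ k ∈ Finset.Icc 2 (n - 1), c k • eN (k + 2) := by
        rw [hde1, map_add, LinearMap.add_apply, map_smul, LinearMap.smul_apply,
          hee1 1 le_rfl hn1, if_pos rfl,
          brL (Finset.Icc 2 (n - 1)) c (fun k => eN (k + 1)) (eN 1)]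
        congr 1
        refine Finset.sum_congr rfl fun k hk => ?_
        simp only [Finset.mem_Icc] at hk
        rw [hee1 (k + 1) (by omega) (by omega), if_neg (by omega), if_neg (by omega)]
      have hB : br (eN 1) (d (eN 1)) = (2 * c 1) • eN 3 := by
        rw [hde1, map_add, map_smul, hee1 1 le_rfl hn1, if_pos rfl,
          brR (eN 1) (Finset.Icc 2 (n - 1)) c (fun k => eN (k + 1))]
        have e0 : ∀ k ∈ Finset.Icc 2 (n - 1), c k • br (eN 1) (eN (k + 1)) = 0 := by
          intro k hk
          simp only [Finset.mem_Icc] at hk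
          rw [hee0 1 (k + 1) le_rfl hn1 (by omega) (by omega), smul_zero]
        rw [Finset.sum_congr rfl e0, Finset.sum_const_zero, add_zero]
      rw [hA, hB]
      have hsum : ∑ k ∈ Finset.Icc 2 (n - 3 + 1), c k • eN (3 + k - 1)
          = ∑ k ∈ Finset.Icc 2 (n - 1), c k • eN (k + 2) := by
        have e1 : ∀ k ∈ Finset.Icc 2 (n - 3 + 1), c k • eN (3 + k - 1)
            = c k • eN (k + 2) := by
          intro k hk
          congr 2
          omega
        rw [Finset.sum_congr rfl e1]
        refine Finset.sum_subset (fun k hk => ?_) (fun k hk hk2 => ?_)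
        · simp only [Finset.mem_Icc] at hk ⊢
          omega
        · simp only [Finset.mem_Icc] at hk hk2
          rw [heN0 (k + 2) (by omega), smul_zero]
      rw [hsum]
      rw [show (2 * ((3 : ℕ) - 1 : ℂ) * c 1) = 2 * c 1 + 2 * c 1 by push_cast; ring, add_smul]
      abel
    | succ m hm ih =>
      intro hmn
      have hmn' : m ≤ n := by omega
      have h := hder (eN m) (eN 1)
      rw [hee1 m (by omega) hmn', if_neg (by omega), if_neg (by omega)] at h
      rw [h]
      have hA : br (d (eN m)) (eN 1)
          = (2 * ((m : ℂ) - 1) * c 1) • eN (m + 1)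
            + ∑ k ∈ Finset.Icc 2 (n - m + 1), c k • eN (m + k) := by
        rw [ih hmn', map_add, LinearMap.add_apply, map_smul, LinearMap.smul_apply,
          hee1 m (by omega) hmn', if_neg (by omega), if_neg (by omega),
          brL (Finset.Icc 2 (n - m + 1)) c (fun k => eN (m + k - 1)) (eN 1)]
        congr 1
        refine Finset.sum_congr rfl fun k hk => ?_
        simp only [Finset.mem_Icc] at hk
        by_cases hkn : m + k - 1 ≤ n
        · rw [hee1 (m + k - 1) (by omega) hkn, if_neg (by omega), if_neg (by omega)]
          congr 2
          omega
        · exfalso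
          omega
      have hB : br (eN m) (d (eN 1)) = (2 * c 1) • eN (m + 1) := by
        rw [hde1, map_add, map_smul, hee1 m (by omega) hmn', if_neg (by omega),
          if_neg (by omega),
          brR (eN m) (Finset.Icc 2 (n - 1)) c (fun k => eN (k + 1))]
        have e0 : ∀ k ∈ Finset.Icc 2 (n - 1), c k • br (eN m) (eN (k + 1)) = 0 := by
          intro k hk
          simp only [Finset.mem_Icc] at hk
          rw [hee0 m (k + 1) (by omega) hmn' (by omega) (by omega), smul_zero]
        rw [Finset.sum_congr rfl e0, Finset.sum_const_zero, add_zero]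
      rw [hA, hB]
      have hsum : ∑ k ∈ Finset.Icc 2 (n - (m + 1) + 1), c k • eN (m + 1 + k - 1)
          = ∑ k ∈ Finset.Icc 2 (n - m + 1), c k • eN (m + k) := by
        have e1 : ∀ k ∈ Finset.Icc 2 (n - (m + 1) + 1), c k • eN (m + 1 + k - 1)
            = c k • eN (m + k) := by
          intro k hk
          congr 2
          omega
        rw [Finset.sum_congr rfl e1]
        refine Finset.sum_subset (fun k hk => ?_) (fun k hk hk2 => ?_)
        · simp only [Finset.mem_Icc] at hk ⊢
          omega
        · simp only [Finset.mem_Icc] at hk hk2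
          rw [heN0 (m + k) (by omega), smul_zero]
      rw [hsum]
      push_cast
      rw [show (2 * ((m : ℂ) + 1 - 1) * c 1) = 2 * ((m : ℂ) - 1) * c 1 + 2 * c 1 by ring,
        add_smul]
      abel
  have key5 : (0 : V) = br (d (eN 2)) (yN 1) + br (eN 2) (d (yN 1)) := by
    have h := hder (eN 2) (yN 1)
    rw [hey1 2 (by omega) (by omega), if_neg (by omega), if_pos rfl, map_zero] at h
    exact h
  have hbr2 : br (eN 2) (d (yN 1)) = 0 := by
    rw [hdy1, brR (eN 2) (Finset.Icc 1 n) c yN]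
    refine Finset.sum_eq_zero fun k hk => ?_
    simp only [Finset.mem_Icc] at hk
    by_cases h1 : k = 1
    · subst h1
      rw [hey1 2 (by omega) (by omega), if_neg (by omega), if_pos rfl, smul_zero]
    · rw [hey0 2 k (by omega) (by omega) (by omega) hk.2, smul_zero]
  have key5' : (0 : V) = ∑ k ∈ Finset.Icc 1 n, b k •
      (if k = 1 then (1/2 : ℂ) • yN 2 else if k = 2 then 0 else (1/2 : ℂ) • yN k) := by
    have h := key5
    rw [hbr2, add_zero, hde2', brL (Finset.Icc 1 n) b eN (yN 1)] at h
    refine h.trans (Finset.sum_congr rfl fun k hk => ?_)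
    simp only [Finset.mem_Icc] at hk
    rw [hey1 k hk.1 hk.2]
  have hb3 : ∀ j, 3 ≤ j → j ≤ n → b j = 0 := by
    intro j hj3 hjn
    have h := congrArg (bas.coord (Sum.inr ⟨j - 1, by omega⟩)) key5'
    rw [map_zero, map_sum] at h
    have hz : ∀ k ∈ Finset.Icc 1 n, k ≠ j → bas.coord (Sum.inr ⟨j - 1, by omega⟩)
        (b k • (if k = 1 then (1/2 : ℂ) • yN 2 else if k = 2 then 0
          else (1/2 : ℂ) • yN k)) = 0 := by
      intro k hk hkj
      simp only [Finset.mem_Icc] at hk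
      by_cases h1 : k = 1
      · subst h1
        rw [if_pos rfl, map_smul, map_smul, cYr, Fin.val_mk, if_neg (by omega),
          smul_zero, smul_zero]
      · by_cases h2 : k = 2
        · subst h2
          rw [if_neg (by omega), if_pos rfl, smul_zero, map_zero]
        · rw [if_neg h1, if_neg h2, map_smul, map_smul, cYr, Fin.val_mk,
            if_neg (by omega), smul_zero, smul_zero]
    rw [Finset.sum_eq_single j hz
      (fun hj => absurd (by simp only [Finset.mem_Icc]; omega) hj)] at h
    rw [if_neg (by omega), if_neg (by omega), map_smul, map_smul, cYr, Fin.val_mk,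
      if_pos (by omega)] at h
    simp only [smul_eq_mul, mul_one] at h
    have h2 := h.symm
    field_simp at h2
    simpa using h2
  have hb1 : b 1 = 0 := by
    have h := congrArg (bas.coord (Sum.inr ⟨1, by omega⟩)) key5'
    rw [map_zero, map_sum] at h
    have hz : ∀ k ∈ Finset.Icc 1 n, k ≠ 1 → bas.coord (Sum.inr ⟨1, by omega⟩)
        (b k • (if k = 1 then (1/2 : ℂ) • yN 2 else if k = 2 then 0
          else (1/2 : ℂ) • yN k)) = 0 := by
      intro k hk hk1
      simp only [Finset.mem_Icc] at hk
      by_cases h2 : k = 2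
      · subst h2
        rw [if_neg (by omega), if_pos rfl, smul_zero, map_zero]
      · rw [if_neg hk1, if_neg h2, map_smul, map_smul, cYr, Fin.val_mk,
          if_neg (by omega), smul_zero, smul_zero]
    rw [Finset.sum_eq_single 1 hz
      (fun hj => absurd (by simp only [Finset.mem_Icc]; omega) hj)] at h
    rw [if_pos rfl, map_smul, map_smul, cYr, Fin.val_mk, if_pos (by omega)] at h
    simp only [smul_eq_mul, mul_one] at h
    have h2 := h.symm
    field_simp at h2
    simpa using h2
  have hde2 : d (eN 2) = b 2 • eN 2 := by
    rw [hde2']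
    rw [Finset.sum_eq_single 2 (fun k hk hk2 => ?_)
      (fun hj => absurd (by simp only [Finset.mem_Icc]; omega) hj)]
    simp only [Finset.mem_Icc] at hk
    by_cases h1 : k = 1
    · subst h1
      rw [hb1, zero_smul]
    · rw [hb3 k (by omega) hk.2, zero_smul]
  have hγ : γ * (((n : ℂ) - 1) * c 1 - b 2) = 0 := by
    have h := hder (eN 2) (eN 2)
    rw [hee2b, hde2] at h
    simp only [map_smul, LinearMap.smul_apply] at h
    rw [hee2b, hde n hn le_rfl] at h
    have hempty : Finset.Icc 2 (n - n + 1) = ∅ := by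
      rw [show n - n + 1 = 1 by omega]
      exact Finset.Icc_eq_empty (by omega)
    rw [hempty, Finset.sum_empty, add_zero, smul_smul, smul_smul] at h
    have h2 := congrArg (bas.coord (Sum.inl ⟨n - 1, by omega⟩)) h
    simp only [map_add, map_smul, cEl, Fin.val_mk, smul_eq_mul] at h2
    rw [if_pos (show n = n - 1 + 1 by omega)] at h2
    simp only [mul_one] at h2
    linear_combination h2 / 2
  have hβkey : ∀ i, 4 ≤ i → i ≤ n →
      β i * (2 * ((i : ℂ) - 1) * c 1) = (2 * c 1 + b 2) * β i := by
    have hA6 : d (br (eN 1) (eN 2))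
        = (∑ k ∈ Finset.Icc 4 n, (β k * (2 * ((k : ℂ) - 1) * c 1)) • eN k)
          + ∑ k ∈ Finset.Icc 4 n,
              β k • (∑ m ∈ Finset.Icc 2 (n - k + 1), c m • eN (k + m - 1)) := by
      rw [hee2a, map_sum]
      have e1 : ∀ k ∈ Finset.Icc 4 n, d (β k • eN k)
          = (β k * (2 * ((k : ℂ) - 1) * c 1)) • eN k
            + β k • (∑ m ∈ Finset.Icc 2 (n - k + 1), c m • eN (k + m - 1)) := by
        intro k hk
        simp only [Finset.mem_Icc] at hk
        rw [map_smul, hde k (by omega) hk.2, smul_add, smul_smul]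
      rw [Finset.sum_congr rfl e1, Finset.sum_add_distrib]
    have hB6 : br (d (eN 1)) (eN 2) + br (eN 1) (d (eN 2))
        = (∑ k ∈ Finset.Icc 4 n, ((2 * c 1 + b 2) * β k) • eN k)
          + ∑ j ∈ Finset.Icc 2 (n - 1),
              c j • (∑ k ∈ Finset.Icc 4 n, β k • eN (j + k - 1)) := by
      rw [hde1, hde2, map_add, LinearMap.add_apply, map_smul, LinearMap.smul_apply,
        hee2a, brL (Finset.Icc 2 (n - 1)) c (fun k => eN (k + 1)) (eN 2),
        map_smul, hee2a]
      have e1 : ∀ j ∈ Finset.Icc 2 (n - 1), c j • br (eN (j + 1)) (eN 2)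
          = c j • (∑ k ∈ Finset.Icc 4 n, β k • eN (j + k - 1)) := by
        intro j hj
        simp only [Finset.mem_Icc] at hj
        rw [hee2c (j + 1) (by omega) (by omega)]
        congr 1
        refine Finset.sum_congr rfl fun k hk => ?_
        congr 2
        omega
      rw [Finset.sum_congr rfl e1, Finset.smul_sum, Finset.smul_sum]
      simp only [smul_smul]
      have e2 : ∑ k ∈ Finset.Icc 4 n, ((2 * c 1 + b 2) * β k) • eN k
          = (∑ k ∈ Finset.Icc 4 n, (2 * c 1 * β k) • eN k)
            + ∑ k ∈ Finset.Icc 4 n, (b 2 * β k) • eN k := by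
        rw [← Finset.sum_add_distrib]
        refine Finset.sum_congr rfl fun k hk => ?_
        rw [← add_smul]
        ring_nf
      rw [e2]
      abel
    have hD6 : (∑ k ∈ Finset.Icc 4 n,
          β k • (∑ m ∈ Finset.Icc 2 (n - k + 1), c m • eN (k + m - 1)))
        = ∑ j ∈ Finset.Icc 2 (n - 1),
            c j • (∑ k ∈ Finset.Icc 4 n, β k • eN (j + k - 1)) := by
      have step1 : ∀ k ∈ Finset.Icc 4 n,
          β k • (∑ m ∈ Finset.Icc 2 (n - k + 1), c m • eN (k + m - 1))
          = ∑ m ∈ Finset.Icc 2 (n - 1), β k • (c m • eN (k + m - 1)) := by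
        intro k hk
        simp only [Finset.mem_Icc] at hk
        rw [Finset.smul_sum]
        refine Finset.sum_subset (fun m hm => ?_) (fun m hm hm2 => ?_)
        · simp only [Finset.mem_Icc] at hm ⊢
          omega
        · simp only [Finset.mem_Icc] at hm hm2
          rw [heN0 (k + m - 1) (by omega), smul_zero, smul_zero]
      rw [Finset.sum_congr rfl step1, Finset.sum_comm]
      refine Finset.sum_congr rfl fun m hm => ?_
      rw [Finset.smul_sum]
      refine Finset.sum_congr rfl fun k hk => ?_
      rw [show m + k - 1 = k + m - 1 by omega]
      exact smul_comm _ _ _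
    have h := hder (eN 1) (eN 2)
    rw [hA6, hB6, hD6] at h
    have hLR := add_right_cancel h
    intro i hi4 hin
    by_cases hn4 : 4 ≤ n
    · exact extE 4 _ _ (by omega) hLR i hi4 hin
    · omega
  have hδkey : δ * ((2 * (n : ℂ) - 1) * c 1) = δ * (c 1 + b 2) := by
    have hA7 : d (br (yN 1) (eN 2))
        = ((∑ k ∈ Finset.Icc 4 n, (β k * ((2 * ((k : ℂ) - 1) - 1) * c 1)) • yN (k - 1))
            + (δ * ((2 * (n : ℂ) - 1) * c 1)) • yN n)
          + ∑ k ∈ Finset.Icc 4 n,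
              β k • (∑ m ∈ Finset.Icc 2 (n - k + 2), c m • yN (k + m - 2)) := by
      rw [hye2a, map_add, map_sum, map_smul, hdy n hn1 le_rfl,
        show Finset.Icc 2 (n - n + 1) = ∅ from by
          rw [show n - n + 1 = 1 by omega]; exact Finset.Icc_eq_empty (by omega),
        Finset.sum_empty, add_zero, smul_smul]
      have e1 : ∀ k ∈ Finset.Icc 4 n, d (β k • yN (k - 1))
          = (β k * ((2 * ((k : ℂ) - 1) - 1) * c 1)) • yN (k - 1)
            + β k • (∑ m ∈ Finset.Icc 2 (n - k + 2), c m • yN (k + m - 2)) := by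
        intro k hk
        simp only [Finset.mem_Icc] at hk
        rw [map_smul, hdy (k - 1) (by omega) (by omega), smul_add, smul_smul,
          Nat.cast_sub (by omega : 1 ≤ k), Nat.cast_one,
          show n - (k - 1) + 1 = n - k + 2 by omega]
        congr 1
        congr 1
        refine Finset.sum_congr rfl fun m hm => ?_
        congr 2
        omega
      rw [Finset.sum_congr rfl e1, Finset.sum_add_distrib]
      abel
    have hB7 : br (d (yN 1)) (eN 2) + br (yN 1) (d (eN 2))
        = ((∑ k ∈ Finset.Icc 4 n, (β k * (c 1 + b 2)) • yN (k - 1))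
            + (δ * (c 1 + b 2)) • yN n)
          + ∑ j ∈ Finset.Icc 2 n,
              c j • (∑ l ∈ Finset.Icc 4 n, β l • yN (j + l - 2)) := by
      rw [hdy1, hde2, brL (Finset.Icc 1 n) c yN (eN 2), map_smul, hye2a,
        hsplit1, Finset.sum_insert (by simp), hye2a]
      have e1 : ∀ j ∈ Finset.Icc 2 n, c j • br (yN j) (eN 2)
          = c j • (∑ l ∈ Finset.Icc 4 n, β l • yN (j + l - 2)) := by
        intro j hj
        simp only [Finset.mem_Icc] at hj
        rw [hye2b j hj.1 hj.2]
      rw [Finset.sum_congr rfl e1, smul_add, smul_add, Finset.smul_sum, Finset.smul_sum]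
      simp only [smul_smul]
      have e2 : ∑ k ∈ Finset.Icc 4 n, (β k * (c 1 + b 2)) • yN (k - 1)
          = (∑ k ∈ Finset.Icc 4 n, (c 1 * β k) • yN (k - 1))
            + ∑ k ∈ Finset.Icc 4 n, (b 2 * β k) • yN (k - 1) := by
        rw [← Finset.sum_add_distrib]
        refine Finset.sum_congr rfl fun k hk => ?_
        rw [← add_smul]
        ring_nf
      rw [e2, show δ * (c 1 + b 2) = c 1 * δ + b 2 * δ by ring, add_smul]
      abel
    have hD7 : (∑ k ∈ Finset.Icc 4 n,
          β k • (∑ m ∈ Finset.Icc 2 (n - k + 2), c m • yN (k + m - 2)))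
        = ∑ j ∈ Finset.Icc 2 n,
            c j • (∑ l ∈ Finset.Icc 4 n, β l • yN (j + l - 2)) := by
      have step1 : ∀ k ∈ Finset.Icc 4 n,
          β k • (∑ m ∈ Finset.Icc 2 (n - k + 2), c m • yN (k + m - 2))
          = ∑ m ∈ Finset.Icc 2 n, β k • (c m • yN (k + m - 2)) := by
        intro k hk
        simp only [Finset.mem_Icc] at hk
        rw [Finset.smul_sum]
        refine Finset.sum_subset (fun m hm => ?_) (fun m hm hm2 => ?_)
        · simp only [Finset.mem_Icc] at hm ⊢
          omega
        · simp only [Finset.mem_Icc] at hm hm2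
          rw [hyN0 (k + m - 2) (by omega), smul_zero, smul_zero]
      rw [Finset.sum_congr rfl step1, Finset.sum_comm]
      refine Finset.sum_congr rfl fun m hm => ?_
      rw [Finset.smul_sum]
      refine Finset.sum_congr rfl fun k hk => ?_
      rw [show m + k - 2 = k + m - 2 by omega]
      exact smul_comm _ _ _
    have h := hder (yN 1) (eN 2)
    rw [hA7, hB7, hD7] at h
    have hLR := add_right_cancel h
    have h2 := congrArg (bas.coord (Sum.inr ⟨n - 1, by omega⟩)) hLR
    simp only [map_add, map_sum, map_smul, cYr, Fin.val_mk, smul_eq_mul] at h2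
    rw [if_pos (show n = n - 1 + 1 by omega)] at h2
    rw [Finset.sum_eq_zero (fun k hk => ?_), Finset.sum_eq_zero (fun k hk => ?_)] at h2
    rotate_left
    · simp only [Finset.mem_Icc] at hk
      rw [if_neg (by omega), mul_zero]
    · simp only [Finset.mem_Icc] at hk
      rw [if_neg (by omega), mul_zero]
    simp only [mul_one, zero_add] at h2
    exact h2
  refine ⟨c, b 2, hde1, hde2, hde, hdy, fun i hi4 hin => ?_, ?_, ?_⟩
  · linear_combination hβkey i hi4 hin
  · linear_combination hδkey
  · linear_combination hγ
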